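/- For every natural number n and every integer r with 1 ≤ r ≤ ⌈log_2 n⌉ − 3 it holds that sum_{i=1}^{n} [ i·2^{−(r+1)}·(1 − 2^{−r})^{i−1} + (1 − 2^{−r})^i − (1 − 2^{−(r−1)})^i − i·2^{−r}·(1 − 2^{−(r−1)})^{i−1} ] ≥ 2^{r−1}. -/

import Mathlib

lemma key_sum (p : ℝ) (n : ℕ) :
    4 * p * ∑ i ∈ Finset.Icc 1 n,
        ((i : ℝ) * (p / 2) * (1 - p) ^ (i - 1)
          + (1 - p) ^ i - (1 - 2 * p) ^ i - (i : ℝ) * p * (1 - 2 * p) ^ (i - 1))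
      = 3 - 2 * (1 - p) ^ n * (3 - 2 * p + n * p)
          + (1 - 2 * p) ^ n * (3 - 4 * p + 2 * n * p) := by
  induction n with
  | zero => simp; ring
  | succ m ih =>
      rw [Finset.sum_Icc_succ_top (by omega), mul_add, ih]
      simp only [Nat.add_sub_cancel]
      push_cast
      ring

theorem alpha_ge (n : ℕ) (r : ℤ) (hr₁ : 1 ≤ r) (hr₂ : r ≤ ⌈Real.logb 2 n⌉ - 3) :
    ∑ i ∈ Finset.Icc 1 n,
        ((i : ℝ) * (2 : ℝ) ^ (-r - 1) * (1 - (2 : ℝ) ^ (-r)) ^ (i - 1)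
          + (1 - (2 : ℝ) ^ (-r)) ^ i
          - (1 - (2 : ℝ) ^ (-r + 1)) ^ i
          - (i : ℝ) * (2 : ℝ) ^ (-r) * (1 - (2 : ℝ) ^ (-r + 1)) ^ (i - 1))
      ≥ (2 : ℝ) ^ (r - 1) := by
  have h2 : (2:ℝ) ≠ 0 := by norm_num
  set p : ℝ := (2:ℝ) ^ (-r) with hp
  have hppos : 0 < p := zpow_pos (by norm_num) _
  have h1 : (2:ℝ) ^ (-r - 1) = p / 2 := by
    rw [hp, show -r - 1 = -r + (-1) by ring, zpow_add₀ h2]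
    norm_num
    ring
  have h2' : (2:ℝ) ^ (-r + 1) = 2 * p := by
    rw [hp, zpow_add₀ h2, zpow_one]
    ring
  have hple : p ≤ 1 / 2 := by
    rw [hp, show (1:ℝ) / 2 = (2:ℝ) ^ (-1 : ℤ) by norm_num]
    exact zpow_le_zpow_right₀ (by norm_num) (by omega)
  -- n ≥ 1 and the size bound
  have hn1 : 1 ≤ n := by
    by_contra h
    have hn0 : n = 0 := by omega
    rw [hn0] at hr₂
    simp [Real.logb] at hr₂
    omega
  have hlog : ((r:ℝ) + 2) < Real.logb 2 n := by
    have hc : (r + 2 : ℤ) < ⌈Real.logb 2 n⌉ := by omega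
    have := Int.lt_ceil.mp hc
    push_cast at this
    linarith
  have hnpos : (0:ℝ) < n := by exact_mod_cast hn1
  have hn2 : (2:ℝ) ^ (r + 2) < n := by
    have hl2 : (0:ℝ) < Real.log 2 := Real.log_pos (by norm_num)
    rw [Real.logb, lt_div_iff₀ hl2] at hlog
    have hlz : Real.log ((2:ℝ) ^ (r + 2)) = (r + 2 : ℝ) * Real.log 2 := by
      rw [Real.log_zpow]; push_cast; ring
    exact (Real.log_lt_log_iff (zpow_pos (by norm_num : (0:ℝ) < 2) (r+2)) hnpos).mp
      (by rw [hlz]; linarith)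
  have hprod : (2:ℝ) ^ (r + 2) * p = 4 := by
    rw [hp, ← zpow_add₀ h2]
    norm_num
  have ht : 4 < (n:ℝ) * p := by
    calc (4:ℝ) = (2:ℝ) ^ (r + 2) * p := hprod.symm
      _ < n * p := by exact mul_lt_mul_of_pos_right hn2 hppos
  set t : ℝ := (n:ℝ) * p with htdef
  -- exponential bounds
  have hexp : 2 * (3 + t) ≤ Real.exp t := by
    have h5 : 1 + t / 4 ≤ Real.exp (t / 4) := by
      have := Real.add_one_le_exp (t / 4); linarith
    have h6 : Real.exp (t / 4) ^ 4 = Real.exp t := by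
      rw [← Real.exp_nat_mul]; congr 1; push_cast; ring
    have hs : 0 ≤ t - 4 := by linarith
    calc 2 * (3 + t) ≤ (1 + t / 4) ^ 4 := by
          nlinarith [pow_nonneg hs 2, pow_nonneg hs 3, pow_nonneg hs 4, hs]
      _ ≤ Real.exp (t / 4) ^ 4 := by
          apply pow_le_pow_left₀ (by linarith) h5
      _ = Real.exp t := h6
  have hu : (1 - p) ^ n ≤ Real.exp (-t) := by
    calc (1 - p) ^ n ≤ Real.exp (-p) ^ n := by
          apply pow_le_pow_left₀ (by linarith)
          have := Real.add_one_le_exp (-p); linarith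
      _ = Real.exp (-t) := by
          rw [← Real.exp_nat_mul, htdef]; ring_nf
  have hbound : 2 * (1 - p) ^ n * (3 - 2 * p + (n:ℝ) * p) ≤ 1 := by
    have hpos3 : (0:ℝ) < 3 - 2 * p + t := by linarith
    have hexppos := Real.exp_pos t
    have hinv : Real.exp (-t) * Real.exp t = 1 := by
      rw [← Real.exp_add]; simp
    have step1 : 2 * (1 - p) ^ n * (3 - 2 * p + t) ≤ 2 * Real.exp (-t) * (3 - 2 * p + t) := by
      have := mul_le_mul_of_nonneg_right hu (le_of_lt hpos3)
      nlinarith [this]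
    have step2 : 2 * Real.exp (-t) * (3 - 2 * p + t) ≤ 1 := by
      have h7 : 2 * (3 - 2 * p + t) ≤ Real.exp t := by linarith
      have h8 := mul_le_mul_of_nonneg_left h7 (le_of_lt (Real.exp_pos (-t)))
      nlinarith [h8, hinv]
    rw [← htdef]
    linarith
  have hv : 0 ≤ (1 - 2 * p) ^ n * (3 - 4 * p + 2 * (n:ℝ) * p) := by
    apply mul_nonneg
    · apply pow_nonneg; linarith
    · linarith
  -- assemble
  simp only [h1, h2']
  have hkey := key_sum p n
  have hE : 3 - 2 * (1 - p) ^ n * (3 - 2 * p + (n:ℝ) * p)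
      + (1 - 2 * p) ^ n * (3 - 4 * p + 2 * (n:ℝ) * p) ≥ 2 := by linarith
  have h3 : (2:ℝ) ^ (r - 1) = 1 / (2 * p) := by
    rw [hp, eq_div_iff (by positivity)]
    rw [show (2:ℝ) * (2:ℝ) ^ (-r) = (2:ℝ) ^ (1 - r) by
      rw [zpow_sub₀ h2, zpow_one]; field_simp [zpow_ne_zero]; rw [← zpow_add₀ h2]; simp]
    rw [← zpow_add₀ h2]
    norm_num
  rw [h3, ge_iff_le, div_le_iff₀ (by positivity)]
  nlinarith [hkey, hE]
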